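/- For every real number L > 0, there are infinitely many positive integers n such that Z(n+1) > L · Z(n); equivalently, the ratio Z(n+1)/Z(n) of consecutive values of Z is unbounded. -/
import Mathlib


/-- The m-th triangular number. -/
def T (m : ℕ) : ℕ := m * (m + 1) / 2

/-- The pseudo-Smarandache function: the least positive m with n ∣ T m. -/
noncomputable def Z (n : ℕ) : ℕ := sInf {m : ℕ | 0 < m ∧ n ∣ T m}

lemma twoT (m : ℕ) : 2 * T m = m * (m + 1) := by
  obtain ⟨c, hc⟩ := Nat.even_mul_succ_self m
  simp only [T, hc]
  omega

lemma Z_prime_odd (q : ℕ) (hq : q.Prime) (hq2 : q ≠ 2) : Z q = q - 1 := by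
  obtain ⟨k, hk⟩ := hq.odd_of_ne_two hq2
  have hTq : T (q - 1) = q * k := by
    have h2 : 2 * T (q - 1) = (q - 1) * q := by
      rw [twoT]; congr 1; omega
    have h2' : 2 * (q * k) = (q - 1) * q := by
      have hq1 : q - 1 = 2 * k := by omega
      rw [hq1]; ring
    omega
  have hmem : (q - 1) ∈ {m : ℕ | 0 < m ∧ q ∣ T m} := by
    refine ⟨by have := hq.two_le; omega, ⟨k, hTq⟩⟩
  have hne : {m : ℕ | 0 < m ∧ q ∣ T m}.Nonempty := ⟨q - 1, hmem⟩
  have hinf := Nat.sInf_mem hne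
  obtain ⟨hpos, hdvd⟩ := hinf
  have h2 : q ∣ sInf {m : ℕ | 0 < m ∧ q ∣ T m} * (sInf {m : ℕ | 0 < m ∧ q ∣ T m} + 1) := by
    rw [← twoT]
    exact hdvd.mul_left 2
  have hle : q - 1 ≤ sInf {m : ℕ | 0 < m ∧ q ∣ T m} := by
    rcases (Nat.Prime.dvd_mul hq).mp h2 with h | h
    · have := Nat.le_of_dvd hpos h; omega
    · have := Nat.le_of_dvd (by omega) h; omega
  exact le_antisymm (Nat.sInf_le hmem) hle

theorem stmt_9 (L : ℝ) (hL : 0 < L) :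
    {n : ℕ | 0 < n ∧ (Z (n + 1) : ℝ) > L * (Z n : ℝ)}.Infinite := by
  rw [Set.infinite_iff_exists_gt]
  intro N
  set b : ℕ := 2 * (⌈L⌉₊ + 1) with hb
  have hb2 : 2 ≤ b := by omega
  have hbL : L < (b : ℝ) := by
    have h1 := Nat.le_ceil L
    have h2 : (⌈L⌉₊ : ℝ) < (b : ℝ) := by exact_mod_cast (by omega : ⌈L⌉₊ < b)
    linarith
  set M : ℕ := 2 * b ^ 2 with hM
  have hbsq : 2 ^ 2 ≤ b ^ 2 := Nat.pow_le_pow_left hb2 2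
  have hbb : b ≤ b ^ 2 := by nlinarith
  have hMb : b + 1 < M := by omega
  haveI : NeZero M := ⟨by positivity⟩
  have hcop : Nat.Coprime (b + 1) M := by
    rw [hM, Nat.coprime_mul_iff_right]
    constructor
    · exact Nat.coprime_two_right.mpr ⟨⌈L⌉₊ + 1, by omega⟩
    · exact (Nat.coprime_self_add_left.mpr (Nat.coprime_one_left b)).pow_right 2
  have hunit : IsUnit ((b + 1 : ℕ) : ZMod M) := (ZMod.isUnit_iff_coprime _ _).mpr hcop
  obtain ⟨q, hqgt, hq, hqmod⟩ := Nat.forall_exists_prime_gt_and_eq_mod hunit (N + M + b + 2)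
  have hmod : q % M = b + 1 := by
    have h1 : q ≡ b + 1 [MOD M] := (ZMod.natCast_eq_natCast_iff _ _ _).mp hqmod
    have h2 : (b + 1) % M = b + 1 := Nat.mod_eq_of_lt hMb
    rw [Nat.ModEq, h2] at h1
    exact h1
  set t := q / M with ht
  have hqe : q = M * t + (b + 1) := by
    rw [ht, ← hmod]
    exact (Nat.div_add_mod q M).symm
  have ht1 : 1 ≤ t := by
    rcases Nat.eq_zero_or_pos t with h | h
    · rw [h, Nat.mul_zero] at hqe; omega
    · exact h
  set m := 2 * b * t with hm
  set n := q - 1 with hn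
  have hm0 : 0 < m := by positivity
  have hnval : n = b * (m + 1) := by
    have : q - 1 = M * t + b := by omega
    rw [hn, this, hM, hm]; ring
  have hTm : T m = n * t := by
    have h1 : 2 * T m = 2 * (n * t) := by
      rw [twoT, hnval, hm]; ring
    omega
  have hZn : Z n ≤ m := Nat.sInf_le ⟨hm0, ⟨t, hTm⟩⟩
  have hM8 : 8 ≤ M := by omega
  have hq2 : q ≠ 2 := by omega
  have hn1 : n + 1 = q := by omega
  have hZq : Z (n + 1) = q - 1 := by rw [hn1]; exact Z_prime_odd q hq hq2
  refine ⟨n, ⟨by omega, ?_⟩, by omega⟩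
  rw [hZq]
  have hc0 : ((q - 1 : ℕ) : ℝ) = (b : ℝ) * m + b := by
    have : (q - 1 : ℕ) = b * m + b := by rw [← hn, hnval]; ring
    rw [this]; push_cast; ring
  have hc1 : (Z n : ℝ) ≤ (m : ℝ) := by exact_mod_cast hZn
  have hc2 : L * (Z n : ℝ) ≤ L * (m : ℝ) := by nlinarith
  have hc3 : L * (m : ℝ) < (b : ℝ) * (m : ℝ) := by
    have hmr : (0 : ℝ) < (m : ℝ) := by exact_mod_cast hm0
    nlinarith
  have hbr : (0 : ℝ) < (b : ℝ) := by positivity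
  rw [hc0]
  linarith
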